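/- Let δ = (δ_1, ..., δ_n) be a sequence of non-negative integers with Σ δ_i = n − k. Then the number of planted forests on vertex set {1,...,n} with exactly k components whose rooted degree sequence equals δ is C(n−1, k−1) · (n−k)! / (δ_1! · δ_2! ⋯ δ_n!). -/

import Mathlib

open Finset
open scoped Classical

/-- A planted forest on `{1,...,n}`, encoded by its parent-pointer function:
`f i = none` means `i` is a root, `f i = some p` means there is an edge from `p` to `i`
oriented away from the root.  Acyclicity is expressed by the existence of a height
function that strictly decreases when passing to the parent. -/
def IsPlantedForest {n : ℕ} (f : Fin n → Option (Fin n)) : Prop :=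
  ∃ ht : Fin n → ℕ, ∀ i p, f i = some p → ht p < ht i

/-- The rooted degree of a vertex `i`: the number of edges starting at `i`,
i.e. the number of children of `i`. -/
def rootedDeg {n : ℕ} (f : Fin n → Option (Fin n)) (i : Fin n) : ℕ :=
  (univ.filter fun j => f j = some i).card

/-- The number of roots, i.e. the number of connected components. -/
def numComponents {n : ℕ} (f : Fin n → Option (Fin n)) : ℕ :=
  (univ.filter fun i => f i = none).card

section PFarith
open scoped Nat

lemma multinomial_succAbove {n : ℕ} (i : Fin (n+1)) (δ : Fin (n+1) → ℕ) (hi : δ i = 0) :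
    Nat.multinomial univ δ = Nat.multinomial univ (δ ∘ i.succAbove) := by
  unfold Nat.multinomial
  rw [Fin.sum_univ_succAbove δ i, Fin.prod_univ_succAbove (fun j => (δ j)!) i, hi]
  simp [Function.comp]

lemma sum_multinomial_update {m : ℕ} (δ : Fin m → ℕ) (h : 0 < ∑ j, δ j) :
    (∑ j ∈ univ.filter (fun j => 1 ≤ δ j),
      Nat.multinomial univ (Function.update δ j (δ j - 1))) = Nat.multinomial univ δ := by
  have hP : 0 < ∏ l, (δ l)! := Finset.prod_pos (fun l _ => Nat.factorial_pos _)
  apply Nat.eq_of_mul_eq_mul_left hP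
  rw [Nat.multinomial_spec, Finset.mul_sum]
  have key : ∀ j ∈ univ.filter (fun j => 1 ≤ δ j),
      (∏ l, (δ l)!) * Nat.multinomial univ (Function.update δ j (δ j - 1))
        = δ j * ((∑ l, δ l) - 1)! := by
    intro j hj
    simp only [mem_filter, mem_univ, true_and] at hj
    have hsum : ∑ l ∈ univ.erase j, δ l = (∑ l, δ l) - δ j := by
      rw [← Finset.add_sum_erase univ δ (mem_univ j)]; omega
    have h2 : ∏ l, (Function.update δ j (δ j - 1) l)! = (δ j - 1)! * ∏ l ∈ univ.erase j, (δ l)! := by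
      rw [← Finset.mul_prod_erase univ (fun l => (Function.update δ j (δ j - 1) l)!) (mem_univ j),
          Function.update_self]
      congr 1
      exact Finset.prod_congr rfl (fun l hl => by
        rw [Function.update_of_ne (Finset.ne_of_mem_erase hl)])
    have hprod : (∏ l, (δ l)!) = δ j * ∏ l, (Function.update δ j (δ j - 1) l)! := by
      rw [h2, ← Finset.mul_prod_erase univ (fun l => (δ l)!) (mem_univ j), ← mul_assoc,
          Nat.mul_factorial_pred (by omega)]
    rw [hprod, mul_assoc, Nat.multinomial_spec]
    congr 1
    rw [Finset.sum_update_of_mem (mem_univ j), Finset.sdiff_singleton_eq_erase, hsum]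
    have : δ j ≤ ∑ l, δ l := Finset.single_le_sum (fun l _ => Nat.zero_le _) (mem_univ j)
    congr 1; omega
  rw [Finset.sum_congr rfl key, ← Finset.sum_mul]
  have : ∑ j ∈ univ.filter (fun j => 1 ≤ δ j), δ j = ∑ j, δ j := by
    rw [Finset.sum_filter_of_ne]; intro j _ hj; omega
  rw [this]
  exact Nat.mul_factorial_pred (by omega)


end PFarith

namespace PFaux
variable {n : ℕ}

noncomputable def ext (i : Fin (n+1)) (v : Option (Fin (n+1))) (g : Fin n → Option (Fin n)) :
    Fin (n+1) → Option (Fin (n+1)) :=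
  fun x => match finSuccEquiv' i x with
    | none => v
    | some y => (g y).map i.succAbove

noncomputable def res (i : Fin (n+1)) (f : Fin (n+1) → Option (Fin (n+1))) :
    Fin n → Option (Fin n) :=
  fun y => (f (i.succAbove y)).bind (finSuccEquiv' i)

lemma ext_at (i : Fin (n+1)) (v) (g) : ext i v g i = v := by
  simp [ext, finSuccEquiv'_at]

lemma ext_succAbove (i : Fin (n+1)) (v) (g) (y : Fin n) :
    ext i v g (i.succAbove y) = (g y).map i.succAbove := by
  simp [ext, finSuccEquiv'_succAbove]

lemma res_ext (i : Fin (n+1)) (v) (g) : res i (ext i v g) = g := by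
  funext y
  rw [res, ext_succAbove]
  cases h : g y with
  | none => simp
  | some q => simp [finSuccEquiv'_succAbove]

lemma ext_res {v} (i : Fin (n+1)) (f) (hv : f i = v) (hni : ∀ x, f x ≠ some i) :
    ext i v (res i f) = f := by
  funext x
  by_cases hx : x = i
  · subst hx; rw [ext_at, hv]
  · obtain ⟨y, rfl⟩ := Fin.exists_succAbove_eq hx
    rw [ext_succAbove, res]
    cases hf : f (i.succAbove y) with
    | none => simp
    | some p =>
      have hpi : p ≠ i := fun hpi => hni _ (hpi ▸ hf)
      obtain ⟨q, rfl⟩ := Fin.exists_succAbove_eq hpi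
      simp [finSuccEquiv'_succAbove]

noncomputable def lift (i : Fin (n+1)) (ht : Fin n → ℕ) (x : Fin (n+1)) : ℕ :=
  (finSuccEquiv' i x).elim (univ.sup ht + 1) ht

lemma lift_at (i : Fin (n+1)) (ht) : lift i ht i = univ.sup ht + 1 := by
  simp [lift, finSuccEquiv'_at]

lemma lift_succAbove (i : Fin (n+1)) (ht) (y : Fin n) : lift i ht (i.succAbove y) = ht y := by
  simp [lift, finSuccEquiv'_succAbove]

lemma forest_ext {v} (i : Fin (n+1)) (g) (hvi : v ≠ some i) (hg : IsPlantedForest g) :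
    IsPlantedForest (ext i v g) := by
  obtain ⟨ht, hht⟩ := hg
  refine ⟨lift i ht, ?_⟩
  intro x p hxp
  by_cases hx : x = i
  · rw [hx] at hxp ⊢
    rw [ext_at] at hxp
    subst hxp
    have hpi : p ≠ i := fun h => hvi (by rw [h])
    obtain ⟨q, rfl⟩ := Fin.exists_succAbove_eq hpi
    rw [lift_at, lift_succAbove]
    exact Nat.lt_succ_of_le (Finset.le_sup (mem_univ q))
  · obtain ⟨y, rfl⟩ := Fin.exists_succAbove_eq hx
    rw [ext_succAbove] at hxp
    obtain ⟨q, hgq, rfl⟩ := Option.map_eq_some_iff.mp hxp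
    rw [lift_succAbove, lift_succAbove]
    exact hht _ _ hgq

lemma forest_res (i : Fin (n+1)) (f) (hf : IsPlantedForest f) :
    IsPlantedForest (res i f) := by
  obtain ⟨ht, hht⟩ := hf
  refine ⟨fun y => ht (i.succAbove y), ?_⟩
  intro y q h
  rw [res] at h
  obtain ⟨p, hp, hq⟩ := Option.bind_eq_some_iff.mp h
  have hpq : p = i.succAbove q := by
    have := congrArg (finSuccEquiv' i).symm hq
    simpa [finSuccEquiv'_symm_some] using this
  show ht (i.succAbove q) < ht (i.succAbove y)
  exact hpq ▸ hht _ _ hp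

lemma deg_ext_at {v} (i : Fin (n+1)) (g) (hvi : v ≠ some i) : rootedDeg (ext i v g) i = 0 := by
  rw [rootedDeg, Finset.card_eq_zero, Finset.filter_eq_empty_iff]
  intro x _
  by_cases hx : x = i
  · subst hx; rw [ext_at]; exact hvi
  · obtain ⟨y, rfl⟩ := Fin.exists_succAbove_eq hx
    rw [ext_succAbove]
    cases g y with
    | none => simp
    | some q => simp [Fin.succAbove_ne]

lemma deg_ext_succAbove {v} (i : Fin (n+1)) (g) (y : Fin n) :
    rootedDeg (ext i v g) (i.succAbove y)
      = rootedDeg g y + (if v = some (i.succAbove y) then 1 else 0) := by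
  rw [rootedDeg, rootedDeg, Finset.card_filter, Finset.card_filter,
    Fin.sum_univ_succAbove (fun x => if ext i v g x = some (i.succAbove y) then 1 else 0) i]
  rw [ext_at, add_comm]
  congr 1
  apply Finset.sum_congr rfl
  intro z _
  rw [ext_succAbove]
  congr 1
  simp only [eq_iff_iff]
  cases g z with
  | none => simp
  | some q =>
    simp only [Option.map_some, Option.some.injEq]
    exact ⟨fun h => by rw [Fin.succAbove_right_injective.eq_iff.mp h],
      fun h => by rw [h]⟩

lemma comps_ext {v} (i : Fin (n+1)) (g) :
    numComponents (ext i v g)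
      = numComponents g + (if v = none then 1 else 0) := by
  rw [numComponents, numComponents, Finset.card_filter, Finset.card_filter,
    Fin.sum_univ_succAbove (fun x => if ext i v g x = none then 1 else 0) i]
  rw [ext_at, add_comm]
  congr 1
  apply Finset.sum_congr rfl
  intro z _
  rw [ext_succAbove]
  cases g z with
  | none => simp
  | some q => simp



noncomputable def S (n k : ℕ) (δ : Fin n → ℕ) : Finset (Fin n → Option (Fin n)) :=
  univ.filter (fun f => IsPlantedForest f ∧ numComponents f = k ∧ ∀ i, rootedDeg f i = δ i)

lemma no_parent_i {k : ℕ} {δ : Fin (n+1) → ℕ} (i : Fin (n+1)) (hδi : δ i = 0)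
    {f : Fin (n+1) → Option (Fin (n+1))} (hf : f ∈ S (n+1) k δ) : ∀ x, f x ≠ some i := by
  simp only [S, mem_filter, mem_univ, true_and] at hf
  have h0 : rootedDeg f i = 0 := (hf.2.2 i).trans hδi
  rw [rootedDeg, Finset.card_eq_zero, Finset.filter_eq_empty_iff] at h0
  exact fun x => h0 (mem_univ x)

lemma fiber_card (i : Fin (n+1)) (v : Option (Fin (n+1))) (hvi : v ≠ some i)
    (δ : Fin (n+1) → ℕ) (hδi : δ i = 0) (k k' : ℕ)
    (hk : k = k' + (if v = none then 1 else 0)) (δ' : Fin n → ℕ)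
    (hδ' : ∀ y, δ (i.succAbove y) = δ' y + (if v = some (i.succAbove y) then 1 else 0)) :
    ((S (n+1) k δ).filter (fun f => f i = v)).card = (S n k' δ').card := by
  apply Finset.card_nbij' (res i) (ext i v)
  · intro f hf
    have hmem := (Finset.mem_filter.mp hf).1
    have hfv : f i = v := (Finset.mem_filter.mp hf).2
    have hni := no_parent_i i hδi hmem
    have hfe : ext i v (res i f) = f := ext_res i f hfv hni
    simp only [S, Finset.mem_coe, mem_filter, mem_univ, true_and] at hmem ⊢
    obtain ⟨hforest, hcomp, hdeg⟩ := hmem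
    refine ⟨forest_res i f hforest, ?_, ?_⟩
    · have := comps_ext i (res i f) (v := v)
      rw [hfe] at this
      omega
    · intro y
      have h1 := deg_ext_succAbove i (res i f) y (v := v)
      rw [hfe] at h1
      have h2 := hdeg (i.succAbove y)
      have h3 := hδ' y
      omega
  · intro g hg
    simp only [S, Finset.mem_coe, mem_filter, mem_univ, true_and] at hg
    obtain ⟨hforest, hcomp, hdeg⟩ := hg
    rw [Finset.mem_coe, Finset.mem_filter]
    refine ⟨?_, ext_at i v g⟩
    simp only [S, mem_filter, mem_univ, true_and]
    refine ⟨forest_ext i g hvi hforest, ?_, ?_⟩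
    · rw [comps_ext, hcomp, hk]
    · intro x
      by_cases hx : x = i
      · rw [hx, deg_ext_at i g hvi, hδi]
      · obtain ⟨y, rfl⟩ := Fin.exists_succAbove_eq hx
        rw [deg_ext_succAbove, hdeg, hδ']
  · intro f hf
    exact ext_res i f (Finset.mem_filter.mp hf).2 (no_parent_i i hδi (Finset.mem_filter.mp hf).1)
  · intro g _
    exact res_ext i v g

lemma fiber_zero (i j : Fin (n+1)) (δ : Fin (n+1) → ℕ) (hδj : δ j = 0) (k : ℕ) :
    ((S (n+1) k δ).filter (fun f => f i = some j)).card = 0 := by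
  rw [Finset.card_eq_zero, Finset.filter_eq_empty_iff]
  intro f hf hfi
  have hdeg : rootedDeg f j = 0 := by
    simp only [S, mem_filter, mem_univ, true_and] at hf
    exact (hf.2.2 j).trans hδj
  rw [rootedDeg, Finset.card_eq_zero, Finset.filter_eq_empty_iff] at hdeg
  exact hdeg (mem_univ i) hfi

lemma S_zero (hn : 0 < n) (δ : Fin n → ℕ) : (S n 0 δ).card = 0 := by
  rw [S, Finset.card_eq_zero, Finset.filter_eq_empty_iff]
  rintro f - ⟨⟨ht, hht⟩, hcomp, -⟩
  have hne : (univ : Finset (Fin n)).Nonempty := ⟨⟨0, hn⟩, mem_univ _⟩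
  obtain ⟨x, -, hx⟩ := Finset.exists_min_image univ ht hne
  rw [numComponents, Finset.card_eq_zero, Finset.filter_eq_empty_iff] at hcomp
  have := hcomp (mem_univ x)
  cases hfx : f x with
  | none => exact this hfx
  | some p => exact absurd (hx p (mem_univ p)) (Nat.not_le.mpr (hht x p hfx))

set_option maxHeartbeats 1600000 in
lemma main : ∀ (n k : ℕ), 1 ≤ k → k ≤ n → ∀ (δ : Fin n → ℕ), (∑ i, δ i = n - k) →
    (S n k δ).card = (n-1).choose (k-1) * Nat.multinomial univ δ := by
  intro n
  induction n with
  | zero => intro k hk hkn; omega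
  | succ n IH =>
    intro k hk hkn δ hδ
    by_cases hkn' : k = n + 1
    · -- base case: every vertex is a root
      subst hkn'
      have hδ0 : ∀ i, δ i = 0 := by
        intro i
        have h1 : ∑ i, δ i = 0 := by omega
        exact Finset.sum_eq_zero_iff.mp h1 i (mem_univ i)
      have hδfun : δ = fun _ => 0 := funext hδ0
      have hsingle : S (n+1) (n+1) δ = {fun _ => none} := by
        apply Finset.eq_singleton_iff_unique_mem.mpr
        constructor
        · simp only [S, mem_filter, mem_univ, true_and]
          refine ⟨⟨fun _ => 0, fun i p h => by simp at h⟩, ?_, ?_⟩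
          · rw [numComponents]; simp
          · intro i; rw [rootedDeg, hδ0 i]; simp
        · intro f hf
          simp only [S, mem_filter, mem_univ, true_and] at hf
          obtain ⟨-, hcomp, -⟩ := hf
          rw [numComponents] at hcomp
          have hfull : (univ.filter fun x => f x = none) = univ := by
            apply Finset.eq_of_subset_of_card_le (Finset.filter_subset _ _)
            rw [hcomp, Finset.card_univ, Fintype.card_fin]
          funext x
          have := Finset.mem_filter.mp (hfull ▸ mem_univ x)
          exact this.2
      rw [hsingle, Finset.card_singleton, hδfun]
      simp [Nat.multinomial, Nat.choose_self]
    · have hkn2 : k ≤ n := by omega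
      -- find a vertex of degree zero
      have hex : ∃ i, δ i = 0 := by
        by_contra h
        push_neg at h
        have h1 : ∀ i ∈ (univ : Finset (Fin (n+1))), 1 ≤ δ i := fun i _ => by
          have := h i; omega
        have := Finset.sum_le_sum h1
        simp only [Finset.sum_const, Finset.card_univ, Fintype.card_fin, smul_eq_mul,
          mul_one] at this
        omega
      obtain ⟨i, hi⟩ := hex
      -- the none fiber
      have hMδ : Nat.multinomial univ δ = Nat.multinomial univ (δ ∘ i.succAbove) :=
        multinomial_succAbove i δ hi
      have hsum' : ∑ y, δ (i.succAbove y) = n + 1 - k := by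
        have := Fin.sum_univ_succAbove δ i
        omega
      have hsome : ∀ j, ((S (n+1) k δ).filter (fun f => f i = some j)).card
          = if 1 ≤ δ j then
              (n-1).choose (k-1) * Nat.multinomial univ (Function.update δ j (δ j - 1))
            else 0 := by
        intro j
        by_cases hδj : 1 ≤ δ j
        · rw [if_pos hδj]
          have hji : j ≠ i := fun h => by rw [h, hi] at hδj; omega
          have hupdi : (Function.update δ j (δ j - 1)) i = 0 := by
            rw [Function.update_of_ne (Ne.symm hji), hi]
          rw [fiber_card i (some j) (by simpa using hji) δ hi k k (by simp)
            ((Function.update δ j (δ j - 1)) ∘ i.succAbove) ?_]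
          · rw [IH k hk hkn2 _ ?_]
            · rw [multinomial_succAbove i _ hupdi]
            · have h1 : ∑ y, (Function.update δ j (δ j - 1)) (i.succAbove y) = n - k := by
                have h2 := Fin.sum_univ_succAbove (Function.update δ j (δ j - 1)) i
                have h3 : ∑ x, Function.update δ j (δ j - 1) x = (∑ x, δ x) - 1 := by
                  rw [Finset.sum_update_of_mem (mem_univ j), Finset.sdiff_singleton_eq_erase]
                  rw [← Finset.add_sum_erase univ δ (mem_univ j)] at hδ ⊢
                  omega
                rw [hupdi] at h2
                have hj_le : δ j ≤ ∑ x, δ x :=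
                  Finset.single_le_sum (fun l _ => Nat.zero_le _) (mem_univ j)
                omega
              exact h1
          · intro y
            by_cases hyj : i.succAbove y = j
            · rw [Function.comp_apply, hyj, Function.update_self, if_pos rfl]
              omega
            · rw [Function.comp_apply, Function.update_of_ne hyj,
                if_neg (by simpa using Ne.symm hyj)]
              omega
        · rw [if_neg hδj]
          exact fiber_zero i j δ (by omega) k
      have hnone : ((S (n+1) k δ).filter (fun f => f i = none)).card
          = (if k = 1 then 0 else (n-1).choose (k-2) * Nat.multinomial univ δ) := by
        rw [fiber_card i none (by simp) δ hi k (k-1) (by simp; omega) (δ ∘ i.succAbove)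
          (fun y => by simp)]
        by_cases hk1 : k = 1
        · rw [if_pos hk1, hk1]
          exact S_zero (by omega) _
        · rw [if_neg hk1, IH (k-1) (by omega) (by omega) _ (by rw [show ∑ y, (δ ∘ i.succAbove) y = ∑ y, δ (i.succAbove y) from rfl, hsum']; omega)]
          rw [hMδ]
          have hkk : k - 1 - 1 = k - 2 := by omega
          rw [hkk]
      have hcard := Finset.card_eq_sum_card_fiberwise
        (f := fun f => f i) (s := S (n+1) k δ) (t := univ) (fun _ _ => mem_univ _)
      rw [hcard, Fintype.sum_option]
      clear hcard
      rw [hnone, Finset.sum_congr rfl (fun j _ => hsome j)]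
      rw [Finset.sum_ite, Finset.sum_const_zero, add_zero, ← Finset.mul_sum]
      have hfilt : ∑ j ∈ univ.filter (fun j => 1 ≤ δ j),
          Nat.multinomial univ (Function.update δ j (δ j - 1)) = Nat.multinomial univ δ :=
        sum_multinomial_update δ (by clear hnone; omega)
      rw [hfilt]
      by_cases hk1 : k = 1
      · subst hk1; simp
      · rw [if_neg hk1, ← Nat.add_mul]
        congr 1
        have h1 : n + 1 - 1 = n := rfl
        have h2 : n = (n - 1) + 1 := by clear hnone hfilt; omega
        have h3 : k - 1 = (k - 2) + 1 := by clear hnone hfilt; omega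
        rw [h1, h2, h3, Nat.choose_succ_succ]
        simp

end PFaux

/-- The number of planted forests on `{1,...,n}` with exactly `k` components and rooted
degree sequence `δ` (with `∑ δᵢ = n - k`) is `C(n-1,k-1) · (n-k)! / (δ₁! ⋯ δₙ!)`. -/
theorem count_planted_forests_with_degree_sequence (n k : ℕ) (hk : 1 ≤ k) (hkn : k ≤ n)
    (δ : Fin n → ℕ) (hδ : ∑ i, δ i = n - k) :
    ((univ : Finset (Fin n → Option (Fin n))).filter
        (fun f => IsPlantedForest f ∧ numComponents f = k ∧ ∀ i, rootedDeg f i = δ i)).card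
      = (n - 1).choose (k - 1) * Nat.multinomial univ δ := by
  have h := PFaux.main n k hk hkn δ hδ
  simpa [PFaux.S] using h
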